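/- Let Γ be a tropical curve of genus g, let D be a divisor of nonnegative rank on Γ, and let P ∈ Γ. Then the coefficient of the P-reduced divisor D_P at P satisfies D_P(P) ≥ deg(D) − g. -/

import Mathlib

open scoped Classical

/-- A combinatorial model of a metric graph: a finite multigraph with positive
edge lengths. -/
structure GraphModel where
  V : Type
  E : Type
  [fintV : Fintype V]
  [fintE : Fintype E]
  src : E → V
  tgt : E → V
  len : E → ℝ
  len_pos : ∀ e, 0 < len e

attribute [instance] GraphModel.fintV GraphModel.fintE

/-- A (compact, connected) tropical curve: a compact connected metric space `Γ`
which is the geometric realization of a finite multigraph with positive edge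
lengths, equipped with the induced path metric.  Each edge `e` is realized by a
parametrization `edge e : [0, len e] → Γ` joining its endpoints, injective on the
interior, the interiors of distinct edges are disjoint and avoid the vertices,
the edges and vertices cover `Γ`, and the metric is the associated path metric. -/
structure TropicalCurve where
  Γ : Type
  [met : MetricSpace Γ]
  [cpt : CompactSpace Γ]
  [conn : ConnectedSpace Γ]
  G : GraphModel
  vtx : G.V → Γ
  edge : G.E → ℝ → Γ
  vtx_inj : Function.Injective vtx
  edge_src : ∀ e, edge e 0 = vtx (G.src e)
  edge_tgt : ∀ e, edge e (G.len e) = vtx (G.tgt e)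
  edge_inj : ∀ e, Set.InjOn (edge e) (Set.Ioo 0 (G.len e))
  interior_disjoint : ∀ e e' t t', t ∈ Set.Ioo 0 (G.len e) → t' ∈ Set.Ioo 0 (G.len e') →
    edge e t = edge e' t' → e = e' ∧ t = t'
  interior_not_vtx : ∀ e t v, t ∈ Set.Ioo 0 (G.len e) → edge e t ≠ vtx v
  cover : ∀ x : Γ, (∃ v, x = vtx v) ∨ ∃ e t, t ∈ Set.Ioo 0 (G.len e) ∧ x = edge e t
  path_metric : ∀ x y : Γ, dist x y = sInf { d : ℝ | ∃ (n : ℕ) (p : ℕ → Γ) (δ : ℕ → ℝ),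
    p 0 = x ∧ p n = y ∧ (∀ i < n, ∃ (e : G.E) (s t : ℝ), s ∈ Set.Icc 0 (G.len e) ∧
      t ∈ Set.Icc 0 (G.len e) ∧ p i = edge e s ∧ p (i+1) = edge e t ∧ δ i = |s - t|) ∧
    d = ∑ i ∈ Finset.range n, δ i }

attribute [instance] TropicalCurve.met TropicalCurve.cpt TropicalCurve.conn

namespace TropicalCurve

variable (C : TropicalCurve)

/-- A divisor on a tropical curve: a finitely supported function `Γ → ℤ`. -/
abbrev Divisor := C.Γ →₀ ℤ

/-- A divisor is effective if all its coefficients are nonnegative. -/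
def Effective (D : Divisor C) : Prop := ∀ v, 0 ≤ D v

/-- The degree of a divisor: the sum of its coefficients. -/
def deg (D : Divisor C) : ℤ := D.sum fun _ n => n

/-- `f` has (outgoing) slope `m` to the right of the point with parameter `t₀`
on the edge `e`. -/
def HasSlopeR (f : C.Γ → ℝ) (e : C.G.E) (t₀ : ℝ) (m : ℤ) : Prop :=
  ∃ ε > 0, t₀ + ε ≤ C.G.len e ∧ ∀ s ∈ Set.Icc t₀ (t₀ + ε),
    f (C.edge e s) = f (C.edge e t₀) + m * (s - t₀)

/-- `f` has (outgoing) slope `m` to the left of the point with parameter `t₀`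
on the edge `e`. -/
def HasSlopeL (f : C.Γ → ℝ) (e : C.G.E) (t₀ : ℝ) (m : ℤ) : Prop :=
  ∃ ε > 0, 0 ≤ t₀ - ε ∧ ∀ s ∈ Set.Icc (t₀ - ε) t₀,
    f (C.edge e s) = f (C.edge e t₀) + m * (t₀ - s)

/-- The branches (outgoing directions) at a point `x` of a tropical curve.  A
branch is encoded by an edge `e`, a parameter `t` with `edge e t = x`, and a
Boolean : `true` for the rightward direction, `false` for the leftward one. -/
def IsBranchAt (b : C.G.E × ℝ × Bool) (x : C.Γ) : Prop :=
  C.edge b.1 b.2.1 = x ∧ b.2.1 ∈ Set.Icc 0 (C.G.len b.1) ∧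
    (if b.2.2 then b.2.1 < C.G.len b.1 else 0 < b.2.1)

/-- `ord_f(x) = n` : the sum of the outgoing slopes of `f` over all branches
emanating from `x` equals `n`. -/
def HasOrderAt (f : C.Γ → ℝ) (x : C.Γ) (n : ℤ) : Prop :=
  ∃ (S : Finset (C.G.E × ℝ × Bool)) (m : C.G.E × ℝ × Bool → ℤ),
    (∀ b, b ∈ S ↔ C.IsBranchAt b x) ∧
    (∀ b ∈ S, if b.2.2 then C.HasSlopeR f b.1 b.2.1 (m b)
      else C.HasSlopeL f b.1 b.2.1 (m b)) ∧
    n = ∑ b ∈ S, m b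

/-- A rational function on a tropical curve: a continuous function which is
piecewise linear with integer slopes and finitely many linear pieces on every
edge. -/
def IsRational (f : C.Γ → ℝ) : Prop :=
  Continuous f ∧ ∀ e : C.G.E, ∃ (n : ℕ) (t : ℕ → ℝ), 0 < n ∧ t 0 = 0 ∧ t n = C.G.len e ∧
    (∀ i < n, t i < t (i+1)) ∧
    ∀ i < n, ∃ (m : ℤ) (b : ℝ), ∀ s ∈ Set.Icc (t i) (t (i+1)),
      f (C.edge e s) = m * s + b

/-- Two divisors are linearly equivalent if their difference is the divisor of a
rational function: `D - D' = div(f)`. -/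
def LinEquiv (D D' : Divisor C) : Prop :=
  ∃ f : C.Γ → ℝ, C.IsRational f ∧ ∀ x, C.HasOrderAt f x (D x - D' x)

/-- `f ∈ R(D)` : `f` is a rational function with `D + div(f) ≥ 0`. -/
def InR (D : Divisor C) (f : C.Γ → ℝ) : Prop :=
  C.IsRational f ∧ ∃ E : Divisor C, C.Effective E ∧ ∀ x, C.HasOrderAt f x (E x - D x)

/-- The branch `b` at `v` leaves the set `X`: some initial punctured segment
along `b` stays in `Γ ∖ (X ∖ {v})`. -/
def BranchLeaving (X : Set C.Γ) (v : C.Γ) (b : C.G.E × ℝ × Bool) : Prop :=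
  C.IsBranchAt b v ∧
    (if b.2.2 then ∃ ε > 0, b.2.1 + ε ≤ C.G.len b.1 ∧
        ∀ s ∈ Set.Ioc b.2.1 (b.2.1 + ε), C.edge b.1 s ∈ X → C.edge b.1 s = v
      else ∃ ε > 0, 0 ≤ b.2.1 - ε ∧
        ∀ s ∈ Set.Ico (b.2.1 - ε) b.2.1, C.edge b.1 s ∈ X → C.edge b.1 s = v)

/-- `deg_X^out(v)` : the number of edges (branch directions) leaving `X` at `v`,
i.e. the maximal number of internally disjoint segments in `Γ ∖ (X ∖ {v})` with
an end at `v`. -/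
noncomputable def outDeg (X : Set C.Γ) (v : C.Γ) : ℕ :=
  {b | C.BranchLeaving X v b}.ncard

/-- The degree (valence) of a point: the number of branches of `Γ` at `v`. -/
noncomputable def pointDeg (v : C.Γ) : ℕ := C.outDeg {v} v

/-- `D` is `v₀`-reduced: its coefficients away from `v₀` are nonnegative, and
every closed connected subset `X ⊆ Γ` avoiding `v₀` has a non-saturated boundary
point, i.e. some `v ∈ ∂X` with `D(v) < deg_X^out(v)`. -/
def IsReduced (v₀ : C.Γ) (D : Divisor C) : Prop :=
  (∀ v, v ≠ v₀ → 0 ≤ D v) ∧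
  ∀ X : Set C.Γ, IsClosed X → IsConnected X → v₀ ∉ X →
    ∃ v ∈ frontier X, D v < (C.outDeg X v : ℤ)

/-- `D` is linearly equivalent to an effective divisor. -/
def EquivEffective (D : Divisor C) : Prop :=
  ∃ E : Divisor C, C.Effective E ∧ C.LinEquiv D E

/-- The rank of a divisor: the largest `r ≥ -1` such that for every effective
divisor `E` of degree `r`, `D - E` is linearly equivalent to an effective
divisor (`-1` when `D` itself is not equivalent to an effective divisor). -/
noncomputable def rank (D : Divisor C) : ℤ :=
  sSup {r : ℤ | -1 ≤ r ∧ ∀ E : Divisor C, C.Effective E → C.deg E = r →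
    C.EquivEffective (D - E)}

/-- The genus of a tropical curve: its first Betti number, computed from any
model as `#E - #V + 1`. -/
noncomputable def genus : ℤ :=
  (Fintype.card C.G.E : ℤ) - (Fintype.card C.G.V : ℤ) + 1

/-- `D` is very ample: the rational functions in `R(D)` separate the points
of `Γ`. -/
def VeryAmple (D : Divisor C) : Prop :=
  ∀ P Q : C.Γ, P ≠ Q → ∃ f g : C.Γ → ℝ, C.InR D f ∧ C.InR D g ∧ f P - g P ≠ f Q - g Q

/-- `D` is ample: some positive integer multiple of `D` is very ample. -/
def Ample (D : Divisor C) : Prop := ∃ m : ℕ, 0 < m ∧ C.VeryAmple (m • D)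

end TropicalCurve

namespace TropicalCurve

variable (C : TropicalCurve)

lemma edge_dist_le (e : C.G.E) {s t : ℝ} (hs : s ∈ Set.Icc 0 (C.G.len e))
    (ht : t ∈ Set.Icc 0 (C.G.len e)) : dist (C.edge e s) (C.edge e t) ≤ |s - t| := by
  rw [C.path_metric]
  apply csInf_le
  · refine ⟨0, ?_⟩
    rintro d ⟨n, p, δ, h0, hn, hstep, rfl⟩
    apply Finset.sum_nonneg
    intro i hi
    obtain ⟨e', s', t', _, _, _, _, hδ⟩ := hstep i (Finset.mem_range.1 hi)
    rw [hδ]; positivity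
  · exact ⟨1, (fun i => if i = 0 then C.edge e s else C.edge e t), (fun _ => |s - t|),
      by simp, by simp, fun i hi => by
        interval_cases i
        exact ⟨e, s, t, hs, ht, by simp, by simp, rfl⟩, by simp⟩

lemma edge_continuousOn (e : C.G.E) :
    ContinuousOn (C.edge e) (Set.Icc 0 (C.G.len e)) := by
  have : LipschitzOnWith 1 (C.edge e) (Set.Icc 0 (C.G.len e)) := by
    intro s hs t ht
    rw [edist_dist, edist_dist]
    have := C.edge_dist_le e hs ht
    have h2 : dist s t = |s - t| := Real.dist_eq s t
    calc ENNReal.ofReal (dist (C.edge e s) (C.edge e t)) ≤ ENNReal.ofReal (dist s t) := by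
          apply ENNReal.ofReal_le_ofReal; rw [h2]; exact this
      _ ≤ 1 * ENNReal.ofReal (dist s t) := by rw [one_mul]
  exact this.continuousOn

lemma finite_param (F : Finset C.Γ) (e : C.G.E) :
    {s : ℝ | s ∈ Set.Ioo 0 (C.G.len e) ∧ C.edge e s ∈ F}.Finite := by
  apply Set.Finite.of_finite_image (f := C.edge e)
  · apply Set.Finite.subset F.finite_toSet
    rintro x ⟨s, hs, rfl⟩; exact hs.2
  · exact (C.edge_inj e).mono (fun s hs => hs.1)

lemma slopeR_unique {f : C.Γ → ℝ} {e : C.G.E} {t : ℝ} {m m' : ℤ}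
    (h : C.HasSlopeR f e t m) (h' : C.HasSlopeR f e t m') : m = m' := by
  obtain ⟨ε, hε, hle, hf⟩ := h
  obtain ⟨ε', hε', hle', hf'⟩ := h'
  set δ := min ε ε' with hδ
  have hδ0 : 0 < δ := lt_min hε hε'
  have h1 := hf (t + δ) ⟨by linarith, add_le_add_right (min_le_left _ _) t⟩
  have h2 := hf' (t + δ) ⟨by linarith, add_le_add_right (min_le_right _ _) t⟩
  have heq : (m : ℝ) * δ = m' * δ := by
    have := h1.symm.trans h2
    simp only [add_sub_cancel_left] at this
    linarith
  have := mul_right_cancel₀ (ne_of_gt hδ0) heq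
  exact_mod_cast this

lemma slopeL_unique {f : C.Γ → ℝ} {e : C.G.E} {t : ℝ} {m m' : ℤ}
    (h : C.HasSlopeL f e t m) (h' : C.HasSlopeL f e t m') : m = m' := by
  obtain ⟨ε, hε, hle, hf⟩ := h
  obtain ⟨ε', hε', hle', hf'⟩ := h'
  set δ := min ε ε' with hδ
  have hδ0 : 0 < δ := lt_min hε hε'
  have h1 := hf (t - δ) ⟨by simp only [sub_le_sub_iff_left]; exact min_le_left _ _, by linarith⟩
  have h2 := hf' (t - δ) ⟨by simp only [sub_le_sub_iff_left]; exact min_le_right _ _, by linarith⟩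
  have heq : (m : ℝ) * δ = m' * δ := by
    have := h1.symm.trans h2
    simp only [sub_sub_cancel] at this
    linarith
  have := mul_right_cancel₀ (ne_of_gt hδ0) heq
  exact_mod_cast this

end TropicalCurve

namespace TropicalCurve

variable (C : TropicalCurve)

lemma param_cases {e : C.G.E} {t : ℝ} (h : t ∈ Set.Icc 0 (C.G.len e)) :
    t = 0 ∨ t ∈ Set.Ioo 0 (C.G.len e) ∨ t = C.G.len e := by
  rcases eq_or_lt_of_le h.1 with h1 | h1
  · exact Or.inl h1.symm
  rcases eq_or_lt_of_le h.2 with h2 | h2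
  · exact Or.inr (Or.inr h2)
  · exact Or.inr (Or.inl ⟨h1, h2⟩)

lemma isBranchAt_interior {x : C.Γ} {e : C.G.E} {s : ℝ} (hs : s ∈ Set.Ioo 0 (C.G.len e))
    (hx : C.edge e s = x) (b : C.G.E × ℝ × Bool) :
    C.IsBranchAt b x ↔ b = (e, s, true) ∨ b = (e, s, false) := by
  constructor
  · rintro ⟨heq, hIcc, hcond⟩
    obtain ⟨e', t, d⟩ := b
    simp only at heq hIcc hcond ⊢
    rcases C.param_cases hIcc with h0 | hint | hL
    · subst h0
      rw [C.edge_src] at heq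
      exact absurd (hx.trans heq.symm) (C.interior_not_vtx e s _ hs)
    · obtain ⟨rfl, rfl⟩ := C.interior_disjoint e' e t s hint hs (heq.trans hx.symm)
      cases d 
      · exact Or.inr rfl
      · exact Or.inl rfl
    · subst hL
      rw [C.edge_tgt] at heq
      exact absurd (hx.trans heq.symm) (C.interior_not_vtx e s _ hs)
  · rintro (rfl | rfl)
    · exact ⟨hx, ⟨hs.1.le, hs.2.le⟩, by simpa using hs.2⟩
    · exact ⟨hx, ⟨hs.1.le, hs.2.le⟩, by simpa using hs.1⟩

lemma isBranchAt_vtx {x : C.Γ} {v : C.G.V} (hx : C.vtx v = x) (b : C.G.E × ℝ × Bool) :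
    C.IsBranchAt b x ↔ (∃ e, C.G.src e = v ∧ b = (e, 0, true)) ∨
      (∃ e, C.G.tgt e = v ∧ b = (e, C.G.len e, false)) := by
  constructor
  · rintro ⟨heq, hIcc, hcond⟩
    obtain ⟨e, t, d⟩ := b
    simp only at heq hIcc hcond ⊢
    rcases C.param_cases hIcc with h0 | hint | hL
    · subst h0
      cases d
      · simp at hcond
      · rw [C.edge_src] at heq
        exact Or.inl ⟨e, C.vtx_inj (heq.trans hx.symm), rfl⟩
    · exact absurd (heq.trans hx.symm) (C.interior_not_vtx e t v hint)
    · subst hL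
      cases d
      · rw [C.edge_tgt] at heq
        exact Or.inr ⟨e, C.vtx_inj (heq.trans hx.symm), rfl⟩
      · simp at hcond
  · rintro (⟨e, he, rfl⟩ | ⟨e, he, rfl⟩)
    · exact ⟨by rw [C.edge_src, he, hx], ⟨le_refl 0, (C.G.len_pos e).le⟩,
        by simpa using C.G.len_pos e⟩
    · exact ⟨by rw [C.edge_tgt, he, hx], ⟨(C.G.len_pos e).le, le_refl _⟩,
        by simpa using C.G.len_pos e⟩

end TropicalCurve

namespace TropicalCurve

variable (C : TropicalCurve)

noncomputable def rsl (f : C.Γ → ℝ) (e : C.G.E) (s : ℝ) : ℤ :=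
  if h : ∃ m, C.HasSlopeR f e s m then h.choose else 0

noncomputable def lsl (f : C.Γ → ℝ) (e : C.G.E) (s : ℝ) : ℤ :=
  if h : ∃ m, C.HasSlopeL f e s m then h.choose else 0

lemma rsl_eq {f : C.Γ → ℝ} {e : C.G.E} {s : ℝ} {m : ℤ} (h : C.HasSlopeR f e s m) :
    C.rsl f e s = m := by
  have hex : ∃ m, C.HasSlopeR f e s m := ⟨m, h⟩
  rw [rsl, dif_pos hex]
  exact C.slopeR_unique hex.choose_spec h

lemma lsl_eq {f : C.Γ → ℝ} {e : C.G.E} {s : ℝ} {m : ℤ} (h : C.HasSlopeL f e s m) :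
    C.lsl f e s = m := by
  have hex : ∃ m, C.HasSlopeL f e s m := ⟨m, h⟩
  rw [lsl, dif_pos hex]
  exact C.slopeL_unique hex.choose_spec h

lemma order_interior {f : C.Γ → ℝ} {e : C.G.E} {s : ℝ} (hs : s ∈ Set.Ioo 0 (C.G.len e))
    {n : ℤ} (hn : C.HasOrderAt f (C.edge e s) n) :
    n = C.rsl f e s + C.lsl f e s := by
  obtain ⟨S, mm, hiff, hslope, hsum⟩ := hn
  have hne : ((e, s, true) : C.G.E × ℝ × Bool) ≠ (e, s, false) := by simp
  have hS : S = {(e, s, true), (e, s, false)} := by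
    apply Finset.ext
    intro b
    rw [hiff b, C.isBranchAt_interior hs rfl]
    simp
  have h1 : (e, s, true) ∈ S := by rw [hS]; simp
  have h2 : (e, s, false) ∈ S := by rw [hS]; simp
  have hs1 := hslope _ h1
  have hs2 := hslope _ h2
  simp only [if_true, if_false] at hs1 hs2
  rw [hsum, hS, Finset.sum_pair hne, C.rsl_eq hs1, C.lsl_eq hs2]

lemma order_vtx {f : C.Γ → ℝ} {v : C.G.V} {n : ℤ} (hn : C.HasOrderAt f (C.vtx v) n) :
    n = (∑ e ∈ Finset.univ.filter (fun e => C.G.src e = v), C.rsl f e 0)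
      + ∑ e ∈ Finset.univ.filter (fun e => C.G.tgt e = v), C.lsl f e (C.G.len e) := by
  obtain ⟨S, mm, hiff, hslope, hsum⟩ := hn
  set S1 : Finset (C.G.E × ℝ × Bool) :=
    (Finset.univ.filter (fun e => C.G.src e = v)).image (fun e => (e, 0, true)) with hS1
  set S2 : Finset (C.G.E × ℝ × Bool) :=
    (Finset.univ.filter (fun e => C.G.tgt e = v)).image (fun e => (e, C.G.len e, false)) with hS2
  have hS : S = S1 ∪ S2 := by
    apply Finset.ext
    intro b
    rw [hiff b, C.isBranchAt_vtx rfl]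
    simp only [hS1, hS2, Finset.mem_union, Finset.mem_image, Finset.mem_filter,
      Finset.mem_univ, true_and]
    constructor
    · rintro (⟨e, he, rfl⟩ | ⟨e, he, rfl⟩)
      · exact Or.inl ⟨e, he, rfl⟩
      · exact Or.inr ⟨e, he, rfl⟩
    · rintro (⟨e, he, rfl⟩ | ⟨e, he, rfl⟩)
      · exact Or.inl ⟨e, he, rfl⟩
      · exact Or.inr ⟨e, he, rfl⟩
  have hdisj : Disjoint S1 S2 := by
    rw [Finset.disjoint_left]
    rintro b hb1 hb2
    simp only [hS1, hS2, Finset.mem_image] at hb1 hb2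
    obtain ⟨e, _, rfl⟩ := hb1
    obtain ⟨e', _, hb⟩ := hb2
    simp at hb
  have hinj1 : Function.Injective (fun e : C.G.E => ((e, 0, true) : C.G.E × ℝ × Bool)) := by
    intro a b h; simpa using h
  rw [hsum, hS, Finset.sum_union hdisj, hS1, hS2, Finset.sum_image (fun a _ b _ h => hinj1 h),
    Finset.sum_image ?hinj2]
  case hinj2 =>
    intro a _ b _ h
    simpa using (Prod.mk.injEq .. ▸ h).1
  congr 1
  · apply Finset.sum_congr rfl
    intro e he
    have hmem : (e, (0:ℝ), true) ∈ S := by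
      rw [hS]; apply Finset.mem_union_left; rw [hS1]; exact Finset.mem_image_of_mem _ he
    have := hslope _ hmem
    simp only [if_true] at this
    exact ((C.rsl_eq this).symm : _)
  · apply Finset.sum_congr rfl
    intro e he
    have hmem : (e, C.G.len e, false) ∈ S := by
      rw [hS]; apply Finset.mem_union_right; rw [hS2]; exact Finset.mem_image_of_mem _ he
    have := hslope _ hmem
    simp only [if_false] at this
    exact ((C.lsl_eq this).symm : _)

end TropicalCurve

private lemma grid_lt {t : ℕ → ℝ} {N : ℕ} (hmono : ∀ i < N, t i < t (i+1)) :
    ∀ j, j ≤ N → ∀ i, i < j → t i < t j := by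
  intro j
  induction j with
  | zero => intro _ i hi; omega
  | succ k ih =>
    intro hk i hi
    have h1 : t k < t (k+1) := hmono k (by omega)
    rcases Nat.lt_or_ge i k with h | h
    · exact lt_trans (ih (by omega) i h) h1
    · have : i = k := by omega
      subst this; exact h1

namespace TropicalCurve

variable (C : TropicalCurve)

section EdgeSum

variable {f : C.Γ → ℝ} {e : C.G.E} {N : ℕ} {t : ℕ → ℝ} {m : ℕ → ℤ} {bb : ℕ → ℝ}

lemma hasSlopeR_piece (hN : 0 < N) (h0 : t 0 = 0) (hL : t N = C.G.len e)
    (hmono : ∀ i < N, t i < t (i+1))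
    (haff : ∀ i < N, ∀ s ∈ Set.Icc (t i) (t (i+1)), f (C.edge e s) = m i * s + bb i)
    {i : ℕ} (hi : i < N) {s : ℝ} (hs : s ∈ Set.Ico (t i) (t (i+1))) :
    C.HasSlopeR f e s (m i) := by
  refine ⟨t (i+1) - s, by linarith [hs.2], ?_, ?_⟩
  · have : t (i+1) ≤ t N := by
      rcases Nat.lt_or_ge (i+1) N with h | h
      · exact (grid_lt hmono N le_rfl _ h).le
      · have : i + 1 = N := by omega
        rw [this]
    rw [hL] at this; linarith
  · intro s' hs'
    have hmem : s' ∈ Set.Icc (t i) (t (i+1)) := ⟨le_trans hs.1 hs'.1, by linarith [hs'.2]⟩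
    have hmem0 : s ∈ Set.Icc (t i) (t (i+1)) := ⟨hs.1, hs.2.le⟩
    rw [haff i hi s' hmem, haff i hi s hmem0]
    ring

lemma hasSlopeL_piece (hN : 0 < N) (h0 : t 0 = 0) (hL : t N = C.G.len e)
    (hmono : ∀ i < N, t i < t (i+1))
    (haff : ∀ i < N, ∀ s ∈ Set.Icc (t i) (t (i+1)), f (C.edge e s) = m i * s + bb i)
    {i : ℕ} (hi : i < N) {s : ℝ} (hs : s ∈ Set.Ioc (t i) (t (i+1))) :
    C.HasSlopeL f e s (-(m i)) := by
  refine ⟨s - t i, by linarith [hs.1], ?_, ?_⟩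
  · have : 0 ≤ t i := by
      rcases Nat.eq_zero_or_pos i with h | h
      · subst h; rw [h0]
      · rw [← h0]; exact (grid_lt hmono i (by omega) 0 h).le
    linarith
  · intro s' hs'
    have hmem : s' ∈ Set.Icc (t i) (t (i+1)) := ⟨by linarith [hs'.1], le_trans hs'.2 hs.2⟩
    have hmem0 : s ∈ Set.Icc (t i) (t (i+1)) := ⟨hs.1.le, hs.2⟩
    rw [haff i hi s' hmem, haff i hi s hmem0]
    push_cast
    ring

lemma grid_locate (hN : 0 < N) (h0 : t 0 = 0) (hL : t N = C.G.len e)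
    (hmono : ∀ i < N, t i < t (i+1)) {s : ℝ} (hs : s ∈ Set.Ioo 0 (C.G.len e)) :
    (∃ i, 0 < i ∧ i < N ∧ s = t i) ∨ (∃ i, i < N ∧ t i < s ∧ s < t (i+1)) := by
  set F := (Finset.range (N+1)).filter (fun i => t i < s) with hF
  have h0F : 0 ∈ F := by
    simp only [hF, Finset.mem_filter, Finset.mem_range]
    exact ⟨by omega, by rw [h0]; exact hs.1⟩
  have hFne : F.Nonempty := ⟨0, h0F⟩
  set i := F.max' hFne with hi
  have hiF : i ∈ F := F.max'_mem hFne
  simp only [hF, Finset.mem_filter, Finset.mem_range] at hiF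
  have hiN : i < N := by
    rcases Nat.lt_or_ge i N with h | h
    · exact h
    · exfalso
      have : i = N := by omega
      rw [this, hL] at hiF
      linarith [hs.2, hiF.2]
  have hnext : ¬ (t (i+1) < s) := by
    intro hlt
    have : i + 1 ∈ F := by
      simp only [hF, Finset.mem_filter, Finset.mem_range]
      exact ⟨by omega, hlt⟩
    have := F.le_max' _ this
    omega
  rcases eq_or_lt_of_le (not_lt.1 hnext) with heq | hlt
  · left
    have hlt2 : i + 1 < N := by
      by_contra hcon
      have heqN : i + 1 = N := by omega
      rw [heqN, hL] at heq
      exact absurd heq (ne_of_lt hs.2)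
    exact ⟨i+1, by omega, hlt2, heq⟩
  · exact Or.inr ⟨i, hiN, hiF.2, hlt⟩

end EdgeSum

end TropicalCurve

namespace TropicalCurve

variable (C : TropicalCurve)

lemma edge_sum {f : C.Γ → ℝ} {o : C.Γ → ℤ} (horder : ∀ x, C.HasOrderAt f x (o x))
    {e : C.G.E} {N : ℕ} {t : ℕ → ℝ} {m : ℕ → ℤ} {bb : ℕ → ℝ}
    (hN : 0 < N) (h0 : t 0 = 0) (hL : t N = C.G.len e)
    (hmono : ∀ i < N, t i < t (i+1))
    (haff : ∀ i < N, ∀ s ∈ Set.Icc (t i) (t (i+1)), f (C.edge e s) = m i * s + bb i)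
    (Q : Finset ℝ) (hQsub : ∀ s ∈ Q, s ∈ Set.Ioo 0 (C.G.len e))
    (hQgrid : ∀ i, 0 < i → i < N → t i ∈ Q) :
    (∑ s ∈ Q, o (C.edge e s)) = - (C.rsl f e 0 + C.lsl f e (C.G.len e)) := by
  -- values of the boundary slopes
  have hrsl0 : C.rsl f e 0 = m 0 := by
    apply C.rsl_eq
    apply C.hasSlopeR_piece hN h0 hL hmono haff hN
    rw [h0]
    exact ⟨le_rfl, by rw [← h0]; exact grid_lt hmono 1 (by omega) 0 (by omega)⟩
  have hNsub : N - 1 + 1 = N := by omega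
  have hlslL : C.lsl f e (C.G.len e) = - m (N-1) := by
    apply C.lsl_eq
    apply C.hasSlopeL_piece hN h0 hL hmono haff (show N - 1 < N by omega)
    rw [hNsub, hL]
    refine ⟨?_, le_rfl⟩
    rw [← hL]
    conv_rhs => rw [← hNsub]
    exact hmono (N-1) (by omega)
  -- the interior grid points
  set IG : Finset ℝ := (Finset.Ioo 0 N).image t with hIG
  have hIGsub : IG ⊆ Q := by
    intro s hs
    simp only [hIG, Finset.mem_image, Finset.mem_Ioo] at hs
    obtain ⟨i, ⟨hi0, hiN⟩, rfl⟩ := hs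
    exact hQgrid i hi0 hiN
  have hval : ∀ s ∈ Q, o (C.edge e s) = C.rsl f e s + C.lsl f e s := by
    intro s hs
    exact C.order_interior (hQsub s hs) (horder _)
  rw [Finset.sum_congr rfl hval]
  have hzero : ∀ s ∈ Q, s ∉ IG → C.rsl f e s + C.lsl f e s = 0 := by
    intro s hs hns
    rcases C.grid_locate hN h0 hL hmono (hQsub s hs) with ⟨i, hi0, hiN, rfl⟩ | ⟨i, hiN, h1, h2⟩
    · exfalso
      apply hns
      simp only [hIG, Finset.mem_image, Finset.mem_Ioo]
      exact ⟨i, ⟨hi0, hiN⟩, rfl⟩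
    · have hr : C.rsl f e s = m i :=
        C.rsl_eq (C.hasSlopeR_piece hN h0 hL hmono haff hiN ⟨h1.le, h2⟩)
      have hl : C.lsl f e s = -(m i) :=
        C.lsl_eq (C.hasSlopeL_piece hN h0 hL hmono haff hiN ⟨h1, h2.le⟩)
      rw [hr, hl]; ring
  rw [← Finset.sum_subset hIGsub hzero]
  have hinj : ∀ a ∈ Finset.Ioo 0 N, ∀ b ∈ Finset.Ioo 0 N, t a = t b → a = b := by
    intro a ha b hb hab
    simp only [Finset.mem_Ioo] at ha hb
    by_contra hne
    rcases Nat.lt_or_ge a b with h | h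
    · exact absurd hab (ne_of_lt (grid_lt hmono b (by omega) a h))
    · have : b < a := by omega
      exact absurd hab.symm (ne_of_lt (grid_lt hmono a (by omega) b this))
  rw [hIG, Finset.sum_image hinj]
  have hival : ∀ i ∈ Finset.Ioo 0 N, C.rsl f e (t i) + C.lsl f e (t i) = m i - m (i-1) := by
    intro i hi
    simp only [Finset.mem_Ioo] at hi
    have hisub : i - 1 + 1 = i := by omega
    have hr : C.rsl f e (t i) = m i :=
      C.rsl_eq (C.hasSlopeR_piece hN h0 hL hmono haff hi.2
        ⟨le_rfl, grid_lt hmono (i+1) (by omega) i (by omega)⟩)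
    have hl : C.lsl f e (t i) = -(m (i-1)) := by
      apply C.lsl_eq
      have hmem : t i ∈ Set.Ioc (t (i-1)) (t (i-1+1)) := by
        rw [hisub]
        exact ⟨grid_lt hmono i (by omega) (i-1) (by omega), le_rfl⟩
      exact C.hasSlopeL_piece hN h0 hL hmono haff (show i - 1 < N by omega) hmem
    rw [hr, hl]; ring
  rw [Finset.sum_congr rfl hival]
  -- telescope
  have hre : Finset.Ioo 0 N = (Finset.range (N-1)).image (· + 1) := by
    apply Finset.ext
    intro k
    simp only [Finset.mem_Ioo, Finset.mem_image, Finset.mem_range]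
    constructor
    · rintro ⟨h1, h2⟩; exact ⟨k - 1, by omega, by omega⟩
    · rintro ⟨j, hj, rfl⟩; omega
  rw [hre, Finset.sum_image (by intro a _ b _ h; simp only at h; omega)]
  have : ∀ j ∈ Finset.range (N-1), m (j + 1) - m (j + 1 - 1) = m (j+1) - m j := by
    intro j _; rw [Nat.add_sub_cancel]
  rw [Finset.sum_congr rfl this, Finset.sum_range_sub (fun j => m j), hrsl0, hlslL]
  ring

end TropicalCurve

namespace TropicalCurve

variable (C : TropicalCurve)

lemma deg_eq_of_linEquiv (D₁ D₂ : Divisor C) (h : C.LinEquiv D₁ D₂) :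
    C.deg D₁ = C.deg D₂ := by
  obtain ⟨f, ⟨hfc, hfe⟩, horder⟩ := h
  set o : C.Γ → ℤ := fun x => D₁ x - D₂ x with ho
  have horder' : ∀ x, C.HasOrderAt f x (o x) := horder
  choose N t hN h0 hL hmono haffEx using hfe
  have haffEx' : ∀ e i, ∃ (mm : ℤ) (cc : ℝ), i < N e →
      ∀ s ∈ Set.Icc (t e i) (t e (i+1)), f (C.edge e s) = mm * s + cc := by
    intro e i
    by_cases hi : i < N e
    · obtain ⟨mm, cc, hmc⟩ := haffEx e i hi
      exact ⟨mm, cc, fun _ => hmc⟩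
    · exact ⟨0, 0, fun h' => absurd h' hi⟩
  choose m bb haff using haffEx'
  set W : Finset C.Γ := D₁.support ∪ D₂.support with hW
  set Vt : Finset C.Γ := Finset.univ.image C.vtx with hVt
  set Grid : Finset C.Γ :=
    Finset.univ.biUnion (fun e => (Finset.range (N e + 1)).image (fun i => C.edge e (t e i)))
    with hGrid
  set S : Finset C.Γ := W ∪ Grid ∪ Vt with hS
  have hVtS : Vt ⊆ S := Finset.subset_union_right
  -- sum over vertices
  have hsumVt : ∑ x ∈ Vt, o x =
      (∑ e, C.rsl f e 0) + ∑ e, C.lsl f e (C.G.len e) := by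
    rw [hVt, Finset.sum_image (fun a _ b _ hab => C.vtx_inj hab)]
    have : ∀ v ∈ Finset.univ, o (C.vtx v) =
        (∑ e ∈ Finset.univ.filter (fun e => C.G.src e = v), C.rsl f e 0)
          + ∑ e ∈ Finset.univ.filter (fun e => C.G.tgt e = v), C.lsl f e (C.G.len e) := by
      intro v _
      exact C.order_vtx (horder' (C.vtx v))
    rw [Finset.sum_congr rfl this, Finset.sum_add_distrib]
    congr 1
    · exact Finset.sum_fiberwise_of_maps_to (fun e _ => Finset.mem_univ (C.G.src e)) _
    · exact Finset.sum_fiberwise_of_maps_to (fun e _ => Finset.mem_univ (C.G.tgt e)) _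
  -- interior part
  set Q : C.G.E → Finset ℝ := fun e => (C.finite_param (S \ Vt) e).toFinset with hQ
  have hQmem : ∀ e s, s ∈ Q e ↔ (s ∈ Set.Ioo 0 (C.G.len e) ∧ C.edge e s ∈ S \ Vt) := by
    intro e s
    rw [hQ]
    exact Set.Finite.mem_toFinset _
  have hB : S \ Vt = Finset.univ.biUnion (fun e => (Q e).image (C.edge e)) := by
    apply Finset.ext
    intro x
    simp only [Finset.mem_biUnion, Finset.mem_image, Finset.mem_univ, true_and]
    constructor
    · intro hx
      rcases C.cover x with ⟨v, rfl⟩ | ⟨e, s, hs, rfl⟩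
      · exfalso
        exact (Finset.mem_sdiff.1 hx).2 (Finset.mem_image_of_mem _ (Finset.mem_univ v))
      · exact ⟨e, s, (hQmem e s).2 ⟨hs, hx⟩, rfl⟩
    · rintro ⟨e, s, hsQ, rfl⟩
      exact ((hQmem e s).1 hsQ).2
  have hdisj : ∀ e ∈ Finset.univ, ∀ e' ∈ Finset.univ, e ≠ e' →
      Disjoint ((Q e).image (C.edge e)) ((Q e').image (C.edge e')) := by
    intro e _ e' _ hne
    rw [Finset.disjoint_left]
    rintro x hx hx'
    obtain ⟨s, hs, rfl⟩ := Finset.mem_image.1 hx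
    obtain ⟨s', hs', heq⟩ := Finset.mem_image.1 hx'
    exact hne ((C.interior_disjoint e' e s' s ((hQmem e' s').1 hs').1 ((hQmem e s).1 hs).1
      heq).1).symm
  have hsumInt : ∑ x ∈ S \ Vt, o x =
      - ((∑ e, C.rsl f e 0) + ∑ e, C.lsl f e (C.G.len e)) := by
    rw [hB, Finset.sum_biUnion]
    swap
    · intro e _ e' _ hne
      exact hdisj e (Finset.mem_univ e) e' (Finset.mem_univ e') hne
    have : ∀ e ∈ Finset.univ, ∑ x ∈ (Q e).image (C.edge e), o x =
        - (C.rsl f e 0 + C.lsl f e (C.G.len e)) := by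
      intro e _
      rw [Finset.sum_image (fun a ha b hb hab =>
        C.edge_inj e ((hQmem e a).1 ha).1 ((hQmem e b).1 hb).1 hab)]
      apply C.edge_sum horder' (hN e) (h0 e) (hL e) (hmono e) (fun i hi => haff e i hi)
      · intro s hs
        exact ((hQmem e s).1 hs).1
      · intro i hi0 hiN
        have hint : t e i ∈ Set.Ioo 0 (C.G.len e) := by
          constructor
          · rw [← h0 e]; exact grid_lt (hmono e) i (by omega) 0 hi0
          · rw [← hL e]; exact grid_lt (hmono e) (N e) le_rfl i hiN
        rw [hQmem]
        refine ⟨hint, Finset.mem_sdiff.2 ⟨?_, ?_⟩⟩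
        · apply Finset.mem_union_left
          apply Finset.mem_union_right
          rw [hGrid]
          apply Finset.mem_biUnion.2
          exact ⟨e, Finset.mem_univ e, Finset.mem_image.2 ⟨i, Finset.mem_range.2 (by omega), rfl⟩⟩
        · rw [hVt]
          intro hmem
          obtain ⟨v, _, hv⟩ := Finset.mem_image.1 hmem
          exact C.interior_not_vtx e (t e i) v hint hv.symm
    rw [Finset.sum_congr rfl this, Finset.sum_neg_distrib, Finset.sum_add_distrib]
  have hkey : ∑ x ∈ S, o x = 0 := by
    rw [← Finset.sum_sdiff hVtS, hsumVt, hsumInt]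
    ring
  -- conclude
  have hdeg : ∀ D' : Divisor C, D'.support ⊆ S → C.deg D' = ∑ x ∈ S, D' x := by
    intro D' hsub
    exact Finsupp.sum_of_support_subset D' hsub _ (fun _ _ => rfl)
  have h1 : C.deg D₁ = ∑ x ∈ S, D₁ x := by
    apply hdeg
    intro x hx
    exact Finset.mem_union_left _ (Finset.mem_union_left _ (Finset.mem_union_left _ hx))
  have h2 : C.deg D₂ = ∑ x ∈ S, D₂ x := by
    apply hdeg
    intro x hx
    exact Finset.mem_union_left _ (Finset.mem_union_left _ (Finset.mem_union_right _ hx))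
  have : C.deg D₁ - C.deg D₂ = ∑ x ∈ S, o x := by
    rw [h1, h2, ho, ← Finset.sum_sub_distrib]
  rw [hkey] at this
  linarith

end TropicalCurve

namespace TropicalCurve

variable (C : TropicalCurve)

/-- Parameters of special points in the interior of edge `e`. -/
noncomputable def spe (pts : Finset C.Γ) (e : C.G.E) : Finset ℝ :=
  (C.finite_param pts e).toFinset

/-- All subdivision parameters on edge `e` (special points and the endpoints). -/
noncomputable def gpe (pts : Finset C.Γ) (e : C.G.E) : Finset ℝ :=
  C.spe pts e ∪ {0, C.G.len e}

/-- Subsegments (refined edges): consecutive pairs of subdivision parameters. -/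
noncomputable def ESeg (pts : Finset C.Γ) : Finset (C.G.E × ℝ × ℝ) :=
  Finset.univ.biUnion (fun e =>
    ((C.gpe pts e ×ˢ C.gpe pts e).filter
      (fun q => q.1 < q.2 ∧ ∀ c ∈ C.gpe pts e, ¬(q.1 < c ∧ c < q.2))).image (fun q => (e, q)))

/-- Vertices of the refined graph, as points of `Γ`. -/
noncomputable def Vhat (pts : Finset C.Γ) : Finset C.Γ :=
  Finset.univ.image C.vtx ∪
    Finset.univ.biUnion (fun e => (C.spe pts e).image (C.edge e))

/-- The two endpoints of a subsegment. -/
def pa (σ : C.G.E × ℝ × ℝ) : C.Γ := C.edge σ.1 σ.2.1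
def pb (σ : C.G.E × ℝ × ℝ) : C.Γ := C.edge σ.1 σ.2.2

lemma mem_spe {pts : Finset C.Γ} {e : C.G.E} {s : ℝ} :
    s ∈ C.spe pts e ↔ s ∈ Set.Ioo 0 (C.G.len e) ∧ C.edge e s ∈ pts :=
  Set.Finite.mem_toFinset _

lemma zero_mem_gpe (pts : Finset C.Γ) (e : C.G.E) : (0:ℝ) ∈ C.gpe pts e := by
  apply Finset.mem_union_right; simp

lemma len_mem_gpe (pts : Finset C.Γ) (e : C.G.E) : C.G.len e ∈ C.gpe pts e := by
  apply Finset.mem_union_right; simp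

lemma gpe_subset_Icc {pts : Finset C.Γ} {e : C.G.E} {s : ℝ} (hs : s ∈ C.gpe pts e) :
    s ∈ Set.Icc 0 (C.G.len e) := by
  rcases Finset.mem_union.1 hs with h | h
  · have := (C.mem_spe.1 h).1
    exact ⟨this.1.le, this.2.le⟩
  · rcases Finset.mem_insert.1 h with rfl | h
    · exact ⟨le_rfl, (C.G.len_pos e).le⟩
    · rw [Finset.mem_singleton.1 h]
      exact ⟨(C.G.len_pos e).le, le_rfl⟩

lemma mem_ESeg {pts : Finset C.Γ} {e : C.G.E} {a b : ℝ} :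
    (e, a, b) ∈ C.ESeg pts ↔ a ∈ C.gpe pts e ∧ b ∈ C.gpe pts e ∧ a < b ∧
      ∀ c ∈ C.gpe pts e, ¬(a < c ∧ c < b) := by
  rw [ESeg, Finset.mem_biUnion]
  constructor
  · rintro ⟨e', _, hmem⟩
    obtain ⟨q, hq, heq⟩ := Finset.mem_image.1 hmem
    obtain ⟨rfl, rfl⟩ : e' = e ∧ q = (a, b) := by
      constructor
      · exact (Prod.mk.injEq .. ▸ heq).1
      · have := (Prod.mk.injEq .. ▸ heq).2
        exact this
    obtain ⟨hq1, hq2⟩ := Finset.mem_filter.1 hq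
    obtain ⟨ha, hb⟩ := Finset.mem_product.1 hq1
    exact ⟨ha, hb, hq2⟩
  · rintro ⟨ha, hb, hab, hcons⟩
    refine ⟨e, Finset.mem_univ e, Finset.mem_image.2 ⟨(a, b), ?_, rfl⟩⟩
    rw [Finset.mem_filter, Finset.mem_product]
    exact ⟨⟨ha, hb⟩, hab, hcons⟩

lemma succ_exists {pts : Finset C.Γ} {e : C.G.E} {a : ℝ} (ha : a ∈ C.gpe pts e)
    (halt : a < C.G.len e) : ∃ b, (e, a, b) ∈ C.ESeg pts := by
  set B := (C.gpe pts e).filter (fun c => a < c) with hB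
  have hBne : B.Nonempty := ⟨C.G.len e, by
    rw [hB, Finset.mem_filter]; exact ⟨C.len_mem_gpe pts e, halt⟩⟩
  set b := B.min' hBne with hb
  have hbB : b ∈ B := B.min'_mem hBne
  rw [hB, Finset.mem_filter] at hbB
  refine ⟨b, C.mem_ESeg.2 ⟨ha, hbB.1, hbB.2, ?_⟩⟩
  rintro c hc ⟨h1, h2⟩
  have : b ≤ c := B.min'_le c (by rw [hB, Finset.mem_filter]; exact ⟨hc, h1⟩)
  linarith

lemma pred_exists {pts : Finset C.Γ} {e : C.G.E} {b : ℝ} (hb : b ∈ C.gpe pts e)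
    (hbgt : 0 < b) : ∃ a, (e, a, b) ∈ C.ESeg pts := by
  set B := (C.gpe pts e).filter (fun c => c < b) with hB
  have hBne : B.Nonempty := ⟨0, by
    rw [hB, Finset.mem_filter]; exact ⟨C.zero_mem_gpe pts e, hbgt⟩⟩
  set a := B.max' hBne with ha
  have haB : a ∈ B := B.max'_mem hBne
  rw [hB, Finset.mem_filter] at haB
  refine ⟨a, C.mem_ESeg.2 ⟨haB.1, hb, haB.2, ?_⟩⟩
  rintro c hc ⟨h1, h2⟩
  have : c ≤ a := B.le_max' c (by rw [hB, Finset.mem_filter]; exact ⟨hc, h2⟩)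
  linarith

lemma gpe_mem_Vhat {pts : Finset C.Γ} {e : C.G.E} {a : ℝ} (ha : a ∈ C.gpe pts e) :
    C.edge e a ∈ C.Vhat pts := by
  rcases Finset.mem_union.1 ha with h | h
  · apply Finset.mem_union_right
    exact Finset.mem_biUnion.2 ⟨e, Finset.mem_univ e, Finset.mem_image_of_mem _ h⟩
  · apply Finset.mem_union_left
    rcases Finset.mem_insert.1 h with rfl | h
    · rw [C.edge_src]; exact Finset.mem_image_of_mem _ (Finset.mem_univ _)
    · rw [Finset.mem_singleton.1 h, C.edge_tgt]
      exact Finset.mem_image_of_mem _ (Finset.mem_univ _)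

lemma mem_Vhat {pts : Finset C.Γ} {x : C.Γ} :
    x ∈ C.Vhat pts ↔ (∃ v, x = C.vtx v) ∨ ∃ e s, s ∈ C.spe pts e ∧ x = C.edge e s := by
  rw [Vhat, Finset.mem_union]
  constructor
  · rintro (h | h)
    · obtain ⟨v, _, rfl⟩ := Finset.mem_image.1 h
      exact Or.inl ⟨v, rfl⟩
    · obtain ⟨e, _, hmem⟩ := Finset.mem_biUnion.1 h
      obtain ⟨s, hs, rfl⟩ := Finset.mem_image.1 hmem
      exact Or.inr ⟨e, s, hs, rfl⟩
  · rintro (⟨v, rfl⟩ | ⟨e, s, hs, rfl⟩)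
    · exact Or.inl (Finset.mem_image_of_mem _ (Finset.mem_univ v))
    · exact Or.inr (Finset.mem_biUnion.2 ⟨e, Finset.mem_univ e, Finset.mem_image_of_mem _ hs⟩)

lemma pts_subset_Vhat (pts : Finset C.Γ) : pts ⊆ C.Vhat pts := by
  intro x hx
  rcases C.cover x with ⟨v, rfl⟩ | ⟨e, s, hs, rfl⟩
  · exact C.mem_Vhat.2 (Or.inl ⟨v, rfl⟩)
  · exact C.mem_Vhat.2 (Or.inr ⟨e, s, C.mem_spe.2 ⟨hs, hx⟩, rfl⟩)

lemma interior_not_special {pts : Finset C.Γ} {e : C.G.E} {a b s : ℝ}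
    (hσ : (e, a, b) ∈ C.ESeg pts) (hs : s ∈ Set.Ioo a b) : C.edge e s ∉ pts := by
  obtain ⟨ha, hb, hab, hcons⟩ := C.mem_ESeg.1 hσ
  intro hmem
  have hIoo : s ∈ Set.Ioo 0 (C.G.len e) := by
    have h1 := (C.gpe_subset_Icc ha).1
    have h2 := (C.gpe_subset_Icc hb).2
    exact ⟨lt_of_le_of_lt h1 hs.1, lt_of_lt_of_le hs.2 h2⟩
  have : s ∈ C.gpe pts e := Finset.mem_union_left _ (C.mem_spe.2 ⟨hIoo, hmem⟩)
  exact hcons s this ⟨hs.1, hs.2⟩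

lemma seg_interior_Ioo {pts : Finset C.Γ} {e : C.G.E} {a b s : ℝ}
    (hσ : (e, a, b) ∈ C.ESeg pts) (hs : s ∈ Set.Ioo a b) : s ∈ Set.Ioo 0 (C.G.len e) := by
  obtain ⟨ha, hb, hab, hcons⟩ := C.mem_ESeg.1 hσ
  exact ⟨lt_of_le_of_lt (C.gpe_subset_Icc ha).1 hs.1,
    lt_of_lt_of_le hs.2 (C.gpe_subset_Icc hb).2⟩

end TropicalCurve

namespace TropicalCurve

variable (C : TropicalCurve)

lemma card_gpe (pts : Finset C.Γ) (e : C.G.E) :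
    (C.gpe pts e).card = (C.spe pts e).card + 2 := by
  rw [gpe, Finset.card_union_of_disjoint, Finset.card_insert_of_notMem, Finset.card_singleton]
  · rw [Finset.mem_singleton]
    exact ne_of_lt (C.G.len_pos e)
  · rw [Finset.disjoint_left]
    intro s hs hmem
    have h1 := (C.mem_spe.1 hs).1
    rcases Finset.mem_insert.1 hmem with rfl | h
    · exact lt_irrefl 0 h1.1
    · rw [Finset.mem_singleton.1 h] at h1
      exact lt_irrefl _ h1.2

lemma card_ESeg_edge (pts : Finset C.Γ) (e : C.G.E) :
    ((C.gpe pts e ×ˢ C.gpe pts e).filter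
      (fun q => q.1 < q.2 ∧ ∀ c ∈ C.gpe pts e, ¬(q.1 < c ∧ c < q.2))).card
      = (C.spe pts e).card + 1 := by
  have hcard : ((C.gpe pts e).erase (C.G.len e)).card = (C.spe pts e).card + 1 := by
    rw [Finset.card_erase_of_mem (C.len_mem_gpe pts e), C.card_gpe]
    omega
  rw [← hcard]
  apply Finset.card_bij (fun q _ => q.1)
  · rintro ⟨a, b⟩ hq
    obtain ⟨hq1, hab, hcons⟩ := Finset.mem_filter.1 hq
    obtain ⟨ha, hb⟩ := Finset.mem_product.1 hq1
    simp only at hab hcons ha hb ⊢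
    apply Finset.mem_erase.2
    refine ⟨?_, ha⟩
    have := (C.gpe_subset_Icc hb).2
    intro hcon
    rw [hcon] at hab
    linarith
  · rintro ⟨a, b⟩ hq ⟨a', b'⟩ hq' heq
    obtain ⟨hq1, hab, hcons⟩ := Finset.mem_filter.1 hq
    obtain ⟨ha, hb⟩ := Finset.mem_product.1 hq1
    obtain ⟨hq1', hab', hcons'⟩ := Finset.mem_filter.1 hq'
    obtain ⟨ha', hb'⟩ := Finset.mem_product.1 hq1'
    simp only at heq hab hcons hab' hcons' ⊢
    subst heq
    have : b = b' := by
      by_contra hne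
      rcases lt_or_gt_of_ne hne with h | h
      · exact hcons' b hb ⟨hab, h⟩
      · exact hcons b' hb' ⟨hab', h⟩
    rw [this]
  · intro a hmema
    obtain ⟨hne, ha⟩ := Finset.mem_erase.1 hmema
    have halt : a < C.G.len e := lt_of_le_of_ne (C.gpe_subset_Icc ha).2 hne
    obtain ⟨b, hσ⟩ := C.succ_exists ha halt
    obtain ⟨ha', hb', hab', hcons'⟩ := C.mem_ESeg.1 hσ
    refine ⟨(a, b), ?_, rfl⟩
    rw [Finset.mem_filter, Finset.mem_product]
    exact ⟨⟨ha', hb'⟩, hab', hcons'⟩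

lemma card_ESeg (pts : Finset C.Γ) :
    (C.ESeg pts).card = Fintype.card C.G.E + ∑ e, (C.spe pts e).card := by
  rw [ESeg, Finset.card_biUnion]
  · have : ∀ e ∈ Finset.univ, (((C.gpe pts e ×ˢ C.gpe pts e).filter
        (fun q => q.1 < q.2 ∧ ∀ c ∈ C.gpe pts e, ¬(q.1 < c ∧ c < q.2))).image
          (fun q => ((e, q) : C.G.E × ℝ × ℝ))).card = (C.spe pts e).card + 1 := by
      intro e _
      rw [Finset.card_image_of_injective _ (fun q q' h => (Prod.mk.injEq .. ▸ h).2),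
        C.card_ESeg_edge]
    rw [Finset.sum_congr rfl this, Finset.sum_add_distrib, Finset.sum_const, smul_eq_mul,
      mul_one, Finset.card_univ]
    omega
  · intro e _ e' _ hne
    rw [Function.onFun, Finset.disjoint_left]
    rintro σ hσ hσ'
    obtain ⟨q, _, rfl⟩ := Finset.mem_image.1 hσ
    obtain ⟨q', _, heq⟩ := Finset.mem_image.1 hσ'
    exact hne ((Prod.mk.injEq .. ▸ heq).1).symm

lemma card_Vhat (pts : Finset C.Γ) :
    (C.Vhat pts).card = Fintype.card C.G.V + ∑ e, (C.spe pts e).card := by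
  rw [Vhat, Finset.card_union_of_disjoint, Finset.card_image_of_injective _ C.vtx_inj,
    Finset.card_biUnion]
  · have h1 : (Finset.univ : Finset C.G.V).card = Fintype.card C.G.V := Finset.card_univ
    have h2 : ∀ e ∈ (Finset.univ : Finset C.G.E), ((C.spe pts e).image (C.edge e)).card
        = (C.spe pts e).card := by
      intro e _
      apply Finset.card_image_of_injOn
      intro a ha b hb hab
      exact C.edge_inj e (C.mem_spe.1 ha).1 (C.mem_spe.1 hb).1 hab
    rw [h1, Finset.sum_congr rfl h2]
  · intro e _ e' _ hne
    rw [Function.onFun, Finset.disjoint_left]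
    rintro x hx hx'
    obtain ⟨s, hs, rfl⟩ := Finset.mem_image.1 hx
    obtain ⟨s', hs', heq⟩ := Finset.mem_image.1 hx'
    exact hne (C.interior_disjoint e e' s s' (C.mem_spe.1 hs).1 (C.mem_spe.1 hs').1 heq.symm).1
  · rw [Finset.disjoint_left]
    rintro x hx hx'
    obtain ⟨v, _, rfl⟩ := Finset.mem_image.1 hx
    obtain ⟨e, _, hmem⟩ := Finset.mem_biUnion.1 hx'
    obtain ⟨s, hs, heq⟩ := Finset.mem_image.1 hmem
    exact C.interior_not_vtx e s v (C.mem_spe.1 hs).1 heq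

end TropicalCurve

namespace TropicalCurve

variable (C : TropicalCurve)

/-- The subsegment of `Γ` corresponding to a refined edge. -/
def seg (σ : C.G.E × ℝ × ℝ) : Set C.Γ := C.edge σ.1 '' Set.Icc σ.2.1 σ.2.2

lemma seg_subset_Icc {pts : Finset C.Γ} {e : C.G.E} {a b : ℝ} (hσ : (e, a, b) ∈ C.ESeg pts) :
    Set.Icc a b ⊆ Set.Icc 0 (C.G.len e) := by
  obtain ⟨ha, hb, hab, _⟩ := C.mem_ESeg.1 hσ
  intro s hs
  exact ⟨le_trans (C.gpe_subset_Icc ha).1 hs.1, le_trans hs.2 (C.gpe_subset_Icc hb).2⟩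

lemma seg_isClosed {pts : Finset C.Γ} {σ : C.G.E × ℝ × ℝ} (hσ : σ ∈ C.ESeg pts) :
    IsClosed (C.seg σ) := by
  obtain ⟨e, a, b⟩ := σ
  exact (isCompact_Icc.image_of_continuousOn
    ((C.edge_continuousOn e).mono (C.seg_subset_Icc hσ))).isClosed

lemma joinedIn_seg {e : C.G.E} {a b s : ℝ} (hab : Set.Icc a b ⊆ Set.Icc 0 (C.G.len e))
    (hs : s ∈ Set.Icc a b) :
    JoinedIn (C.edge e '' Set.Icc a b) (C.edge e a) (C.edge e s) := by
  have haa : a ∈ Set.Icc a b := ⟨le_rfl, le_trans hs.1 hs.2⟩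
  have hparam : ∀ τ : unitInterval, a + τ.1 * (s - a) ∈ Set.Icc a b := by
    intro τ
    constructor
    · nlinarith [τ.2.1, τ.2.2, hs.1, hs.2]
    · nlinarith [τ.2.1, τ.2.2, hs.1, hs.2]
  have hcont : Continuous (fun τ : unitInterval => C.edge e (a + τ.1 * (s - a))) := by
    apply (C.edge_continuousOn e).comp_continuous
    · exact continuous_const.add (continuous_subtype_val.mul continuous_const)
    · intro τ; exact hab (hparam τ)
  refine ⟨⟨⟨fun τ => C.edge e (a + τ.1 * (s - a)), hcont⟩, ?_, ?_⟩, ?_⟩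
  · show C.edge e (a + (0:ℝ) * (s - a)) = C.edge e a
    norm_num
  · show C.edge e (a + (1:ℝ) * (s - a)) = C.edge e s
    norm_num
  · intro τ
    exact Set.mem_image_of_mem _ (hparam τ)

end TropicalCurve

namespace TropicalCurve

variable (C : TropicalCurve)

lemma metric_step (P : C.Γ) (DP : Divisor C) (h₁ : C.IsReduced P DP)
    {pts : Finset C.Γ} (hPpts : P ∈ pts)
    {A : Finset C.Γ} (hA : A ⊆ (C.Vhat pts).erase P) (hAne : A.Nonempty) :
    ∃ v ∈ A, (DP v : ℤ) < ((C.ESeg pts).filter (fun σ => ¬(C.pa σ = C.pb σ) ∧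
      ((C.pa σ = v ∧ C.pb σ ∉ A) ∨ (C.pb σ = v ∧ C.pa σ ∉ A)))).card := by
  classical
  obtain ⟨a₀, ha₀⟩ := hAne
  set r : C.Γ → C.Γ → Prop := fun u v => ∃ σ ∈ C.ESeg pts,
    ((C.pa σ = u ∧ C.pb σ = v) ∨ (C.pa σ = v ∧ C.pb σ = u)) ∧ C.pa σ ∈ A ∧ C.pb σ ∈ A
    with hr
  set Cs : Finset C.Γ := A.filter (fun v => Relation.ReflTransGen r a₀ v) with hCs
  set Ein : Finset (C.G.E × ℝ × ℝ) :=
    (C.ESeg pts).filter (fun σ => C.pa σ ∈ Cs ∧ C.pb σ ∈ Cs) with hEin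
  set X : Set C.Γ := (↑Cs : Set C.Γ) ∪ ⋃ σ ∈ (↑Ein : Set (C.G.E × ℝ × ℝ)), C.seg σ with hX
  have ha₀Cs : a₀ ∈ Cs := Finset.mem_filter.2 ⟨ha₀, Relation.ReflTransGen.refl⟩
  have hCsX : (↑Cs : Set C.Γ) ⊆ X := Set.subset_union_left
  have hsegX : ∀ σ ∈ Ein, C.seg σ ⊆ X := by
    intro σ hσ y hy
    exact Set.mem_union_right _ (Set.mem_biUnion hσ hy)
  -- X is closed
  have hclosed : IsClosed X := by
    apply IsClosed.union
    · exact Cs.finite_toSet.isClosed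
    · apply Set.Finite.isClosed_biUnion Ein.finite_toSet
      intro σ hσ
      exact C.seg_isClosed (Finset.mem_filter.1 hσ).1
  -- P is not in X
  have hPX : P ∉ X := by
    rintro (hP | hP)
    · have := hA (Finset.mem_filter.1 hP).1
      exact (Finset.mem_erase.1 this).1 rfl
    · obtain ⟨σ, hσ, hPseg⟩ := Set.mem_iUnion₂.1 hP
      obtain ⟨e, aa, bbb⟩ := σ
      obtain ⟨s, hsmem, hPeq⟩ := hPseg
      simp only at hsmem hPeq
      have hσE := (Finset.mem_filter.1 hσ).1
      have hCsne : ∀ z ∈ Cs, z ≠ P := by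
        intro z hz
        exact (Finset.mem_erase.1 (hA (Finset.mem_filter.1 hz).1)).1
      rcases eq_or_lt_of_le hsmem.1 with heq1 | hlt1
      · apply hCsne _ (Finset.mem_filter.1 hσ).2.1
        show C.edge e aa = P
        rw [heq1]; exact hPeq
      rcases eq_or_lt_of_le hsmem.2 with heq2 | hlt2
      · apply hCsne _ (Finset.mem_filter.1 hσ).2.2
        show C.edge e bbb = P
        rw [← heq2]; exact hPeq
      · exact C.interior_not_special hσE ⟨hlt1, hlt2⟩ (hPeq ▸ hPpts)
  -- X is connected
  have hconn : IsConnected X := by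
    apply IsPathConnected.isConnected
    refine ⟨a₀, hCsX ha₀Cs, ?_⟩
    have hjoin : ∀ v ∈ Cs, JoinedIn X a₀ v := by
      intro v hv
      have hrtg : Relation.ReflTransGen r a₀ v := (Finset.mem_filter.1 hv).2
      induction hrtg with
      | refl => exact JoinedIn.refl (hCsX ha₀Cs)
      | tail hru huv ih =>
        rename_i u w
        have huA : u ∈ A := by
          obtain ⟨σ, _, hor, hpa, hpb⟩ := huv
          rcases hor with ⟨h1, _⟩ | ⟨_, h2⟩
          · exact h1 ▸ hpa
          · exact h2 ▸ hpb
        have huCs : u ∈ Cs := Finset.mem_filter.2 ⟨huA, hru⟩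
        have hwA : w ∈ A := by
          obtain ⟨σ, _, hor, hpa, hpb⟩ := huv
          rcases hor with ⟨_, h2⟩ | ⟨h1, _⟩
          · exact h2 ▸ hpb
          · exact h1 ▸ hpa
        have hwCs : w ∈ Cs := Finset.mem_filter.2 ⟨hwA, Relation.ReflTransGen.tail hru huv⟩
        obtain ⟨σ, hσE, hor, hpa, hpb⟩ := huv
        have hσEin : σ ∈ Ein := by
          rw [hEin, Finset.mem_filter]
          refine ⟨hσE, ?_, ?_⟩
          · rcases hor with ⟨h1, _⟩ | ⟨h1, _⟩
            · exact h1 ▸ huCs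
            · exact h1 ▸ hwCs
          · rcases hor with ⟨_, h2⟩ | ⟨_, h2⟩
            · exact h2 ▸ hwCs
            · exact h2 ▸ huCs
        obtain ⟨e, aa, bbb⟩ := σ
        have hjseg : JoinedIn (C.seg (e, aa, bbb)) (C.pa (e, aa, bbb)) (C.pb (e, aa, bbb)) := by
          have hmm := C.mem_ESeg.1 hσE
          exact C.joinedIn_seg (C.seg_subset_Icc hσE) ⟨hmm.2.2.1.le, le_rfl⟩
        have hjoinuw : JoinedIn X u w := by
          rcases hor with ⟨h1, h2⟩ | ⟨h1, h2⟩
          · rw [← h1, ← h2]; exact hjseg.mono (hsegX _ hσEin)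
          · rw [← h1, ← h2]; exact (hjseg.mono (hsegX _ hσEin)).symm
        exact (ih huCs).trans hjoinuw
    intro y hy
    rcases hy with hy | hy
    · exact hjoin y hy
    · obtain ⟨σ, hσ, hyseg⟩ := Set.mem_iUnion₂.1 hy
      obtain ⟨e, aa, bbb⟩ := σ
      obtain ⟨s, hsmem, rfl⟩ := hyseg
      have hσE := (Finset.mem_filter.1 hσ).1
      have hpaCs : C.pa (e, aa, bbb) ∈ Cs := (Finset.mem_filter.1 hσ).2.1
      have hj2 : JoinedIn X (C.edge e aa) (C.edge e s) :=
        (C.joinedIn_seg (C.seg_subset_Icc hσE) hsmem).mono (hsegX _ hσ)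
      exact (hjoin _ hpaCs).trans hj2
  obtain ⟨v, hvfr, hvlt⟩ := h₁.2 X hclosed hconn hPX
  have hvX : v ∈ X := by
    have := frontier_subset_closure (s := X) hvfr
    rwa [hclosed.closure_eq] at this
  -- classify the point v
  have hvCs_or : v ∈ Cs ∨ ∃ (e : C.G.E) (aa bb s : ℝ),
      (e, aa, bb) ∈ Ein ∧ s ∈ Set.Ioo aa bb ∧ C.edge e s = v := by
    rcases hvX with hv | hv
    · exact Or.inl hv
    · obtain ⟨σ, hσ, hvseg⟩ := Set.mem_iUnion₂.1 hv
      obtain ⟨e, aa, bbb⟩ := σ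
      obtain ⟨s, hsmem, hveq⟩ := hvseg
      simp only at hsmem hveq
      rcases eq_or_lt_of_le hsmem.1 with heq1 | hlt1
      · left
        have : C.pa (e, aa, bbb) = v := by show C.edge e aa = v; rw [heq1]; exact hveq
        exact this ▸ (Finset.mem_filter.1 hσ).2.1
      rcases eq_or_lt_of_le hsmem.2 with heq2 | hlt2
      · left
        have : C.pb (e, aa, bbb) = v := by show C.edge e bbb = v; rw [← heq2]; exact hveq
        exact this ▸ (Finset.mem_filter.1 hσ).2.2
      · exact Or.inr ⟨e, aa, bbb, s, hσ, ⟨hlt1, hlt2⟩, hveq⟩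
  rcases hvCs_or with hvCs | ⟨e, aa, bb2, s, hσEin, hsIoo, hveq⟩
  · have hvA : v ∈ A := (Finset.mem_filter.1 hvCs).1
    have hvV : v ∈ C.Vhat pts := Finset.mem_of_mem_erase (hA hvA)
    refine ⟨v, hvA, ?_⟩
    set endB : C.G.E × ℝ × ℝ → C.G.E × ℝ × Bool := fun σ =>
      if C.pa σ = v then (σ.1, σ.2.1, true) else (σ.1, σ.2.2, false) with hendB
    set δfin := (C.ESeg pts).filter (fun σ => ¬(C.pa σ = C.pb σ) ∧
      ((C.pa σ = v ∧ C.pb σ ∉ A) ∨ (C.pb σ = v ∧ C.pa σ ∉ A))) with hδfin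
    suffices hle : C.outDeg X v ≤ δfin.card by
      calc (DP v : ℤ) < (C.outDeg X v : ℤ) := hvlt
        _ ≤ (δfin.card : ℤ) := by exact_mod_cast hle
    have hsub : {b | C.BranchLeaving X v b} ⊆ ↑(δfin.image endB) := by
      rintro ⟨e, t, d⟩ ⟨hbr, hleave⟩
      obtain ⟨heq, hIcc, hcond⟩ := hbr
      simp only at heq hIcc hcond hleave
      have hnev : ∀ s' : ℝ, s' ∈ Set.Ioo 0 (C.G.len e) → s' ≠ t → C.edge e s' ≠ v := by
        intro s' hs' hne hcon
        rcases C.param_cases hIcc with h0' | hint | hL'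
        · exact C.interior_not_vtx e s' (C.G.src e) hs'
            (by rw [hcon, ← heq, h0']; exact C.edge_src e)
        · exact hne (C.edge_inj e hs' hint (hcon.trans heq.symm))
        · exact C.interior_not_vtx e s' (C.G.tgt e) hs'
            (by rw [hcon, ← heq, hL']; exact C.edge_tgt e)
      have htgpe : t ∈ C.gpe pts e := by
        rcases C.mem_Vhat.1 hvV with ⟨w, hw⟩ | ⟨e', s', hs', hv'⟩
        · rcases C.param_cases hIcc with h0' | hint | hL'
          · rw [h0']; exact C.zero_mem_gpe pts e
          · exact absurd (heq.trans hw) (C.interior_not_vtx e t w hint)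
          · rw [hL']; exact C.len_mem_gpe pts e
        · rcases C.param_cases hIcc with h0' | hint | hL'
          · exfalso
            apply C.interior_not_vtx e' s' (C.G.src e) (C.mem_spe.1 hs').1
            rw [← hv', ← heq, h0']; exact C.edge_src e
          · obtain ⟨rfl, rfl⟩ := C.interior_disjoint e e' t s' hint (C.mem_spe.1 hs').1
              (heq.trans hv')
            exact Finset.mem_union_left _ hs'
          · exfalso
            apply C.interior_not_vtx e' s' (C.G.tgt e) (C.mem_spe.1 hs').1
            rw [← hv', ← heq, hL']; exact C.edge_tgt e
      cases d
      · -- leftward branch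
        simp only [Bool.false_eq_true, if_false] at hcond hleave
        obtain ⟨a', hσ₁⟩ := C.pred_exists htgpe hcond
        have hpb1 : C.pb (e, a', t) = v := heq
        have ha't : a' < t := (C.mem_ESeg.1 hσ₁).2.2.1
        have hpaA : C.pa (e, a', t) ∉ A := by
          intro hin
          have hrtg : Relation.ReflTransGen r a₀ (C.pa (e, a', t)) :=
            Relation.ReflTransGen.tail (Finset.mem_filter.1 hvCs).2
              ⟨(e, a', t), hσ₁, Or.inr ⟨rfl, hpb1⟩, hin, hpb1 ▸ hvA⟩
          have hpaCs : C.pa (e, a', t) ∈ Cs := Finset.mem_filter.2 ⟨hin, hrtg⟩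
          have hσEin1 : (e, a', t) ∈ Ein :=
            Finset.mem_filter.2 ⟨hσ₁, hpaCs, hpb1 ▸ hvCs⟩
          obtain ⟨ε, hε, hεpos, hcl⟩ := hleave
          set s₁ := max ((a' + t)/2) (t - ε) with hs₁def
          have h1 : s₁ < t := max_lt (by linarith) (by linarith)
          have h2 : t - ε ≤ s₁ := le_max_right _ _
          have h3 : a' < s₁ := lt_of_lt_of_le (by linarith) (le_max_left _ _)
          have hs₁X : C.edge e s₁ ∈ X := hsegX _ hσEin1 ⟨s₁, ⟨h3.le, h1.le⟩, rfl⟩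
          have := hcl s₁ ⟨h2, h1⟩ hs₁X
          exact hnev s₁ (C.seg_interior_Ioo hσ₁ ⟨h3, h1⟩) (ne_of_lt h1) this
        have hpane : ¬ (C.pa (e, a', t) = v) := fun hcon => hpaA (hcon ▸ hvA)
        have hnloop : ¬(C.pa (e, a', t) = C.pb (e, a', t)) := fun hcon =>
          hpane (hcon.trans hpb1)
        have hmemδ : (e, a', t) ∈ δfin :=
          Finset.mem_filter.2 ⟨hσ₁, hnloop, Or.inr ⟨hpb1, hpaA⟩⟩
        apply Finset.mem_coe.2
        apply Finset.mem_image.2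
        refine ⟨(e, a', t), hmemδ, ?_⟩
        rw [hendB]
        simp only [if_neg hpane]
      · -- rightward branch
        simp only [if_true] at hcond hleave
        obtain ⟨b', hσ₀⟩ := C.succ_exists htgpe hcond
        have hpa0 : C.pa (e, t, b') = v := heq
        have htb' : t < b' := (C.mem_ESeg.1 hσ₀).2.2.1
        have hpbA : C.pb (e, t, b') ∉ A := by
          intro hin
          have hrtg : Relation.ReflTransGen r a₀ (C.pb (e, t, b')) :=
            Relation.ReflTransGen.tail (Finset.mem_filter.1 hvCs).2
              ⟨(e, t, b'), hσ₀, Or.inl ⟨hpa0, rfl⟩, hpa0 ▸ hvA, hin⟩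
          have hpbCs : C.pb (e, t, b') ∈ Cs := Finset.mem_filter.2 ⟨hin, hrtg⟩
          have hσEin0 : (e, t, b') ∈ Ein :=
            Finset.mem_filter.2 ⟨hσ₀, hpa0 ▸ hvCs, hpbCs⟩
          obtain ⟨ε, hε, hεlen, hcl⟩ := hleave
          set s₀ := min ((t + b')/2) (t + ε) with hs₀def
          have h1 : t < s₀ := lt_min (by linarith) (by linarith)
          have h2 : s₀ ≤ t + ε := min_le_right _ _
          have h3 : s₀ < b' := lt_of_le_of_lt (min_le_left _ _) (by linarith)
          have hs₀X : C.edge e s₀ ∈ X := hsegX _ hσEin0 ⟨s₀, ⟨h1.le, h3.le⟩, rfl⟩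
          have := hcl s₀ ⟨h1, h2⟩ hs₀X
          exact hnev s₀ (C.seg_interior_Ioo hσ₀ ⟨h1, h3⟩) (ne_of_gt h1) this
        have hnloop : ¬(C.pa (e, t, b') = C.pb (e, t, b')) := fun hcon =>
          hpbA (hcon ▸ (hpa0 ▸ hvA))
        have hmemδ : (e, t, b') ∈ δfin :=
          Finset.mem_filter.2 ⟨hσ₀, hnloop, Or.inl ⟨hpa0, hpbA⟩⟩
        apply Finset.mem_coe.2
        apply Finset.mem_image.2
        refine ⟨(e, t, b'), hmemδ, ?_⟩
        rw [hendB]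
        simp only [if_pos hpa0]
    calc C.outDeg X v = {b | C.BranchLeaving X v b}.ncard := rfl
      _ ≤ (↑(δfin.image endB) : Set (C.G.E × ℝ × Bool)).ncard :=
          Set.ncard_le_ncard hsub (δfin.image endB).finite_toSet
      _ = (δfin.image endB).card := Set.ncard_coe_finset _
      _ ≤ δfin.card := Finset.card_image_le
  · -- v is in the interior of a subsegment : impossible
    exfalso
    have hσE : (e, aa, bb2) ∈ C.ESeg pts := (Finset.mem_filter.1 hσEin).1
    have hsint : s ∈ Set.Ioo 0 (C.G.len e) := C.seg_interior_Ioo hσE hsIoo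
    have hvP : v ≠ P := fun h => hPX (h ▸ hvX)
    have h0 : (0:ℤ) ≤ DP v := h₁.1 v hvP
    have hnel : ∀ s' : ℝ, s' ∈ Set.Ioo 0 (C.G.len e) → s' ≠ s → C.edge e s' ≠ v := by
      intro s' hs' hne hcon
      rw [← hveq] at hcon
      exact hne (C.edge_inj e hs' hsint hcon)
    have hempty : {b | C.BranchLeaving X v b} = ∅ := by
      apply Set.eq_empty_iff_forall_notMem.2
      rintro ⟨e', t, d⟩ ⟨hbr, hleave⟩
      rcases (C.isBranchAt_interior hsint hveq _).1 hbr with hb | hb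
      · rw [hb] at hleave
        simp only [if_true] at hleave
        obtain ⟨ε, hε, hεlen, hcl⟩ := hleave
        set s₀ := min ((s + bb2)/2) (s + ε) with hs₀
        have h1 : s < s₀ := lt_min (by linarith [hsIoo.2]) (by linarith)
        have h2 : s₀ ≤ s + ε := min_le_right _ _
        have h3 : s₀ < bb2 := lt_of_le_of_lt (min_le_left _ _) (by linarith [hsIoo.2])
        have hs₀X : C.edge e s₀ ∈ X := hsegX _ hσEin
          ⟨s₀, ⟨by linarith [hsIoo.1], h3.le⟩, rfl⟩
        have := hcl s₀ ⟨h1, h2⟩ hs₀X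
        exact hnel s₀ (C.seg_interior_Ioo hσE ⟨lt_trans hsIoo.1 h1, h3⟩) (ne_of_gt h1) this
      · rw [hb] at hleave
        simp only [if_false] at hleave
        obtain ⟨ε, hε, hεpos, hcl⟩ := hleave
        set s₁ := max ((aa + s)/2) (s - ε) with hs₁
        have h1 : s₁ < s := max_lt (by linarith [hsIoo.1]) (by linarith)
        have h2 : s - ε ≤ s₁ := le_max_right _ _
        have h3 : aa < s₁ := lt_of_lt_of_le (by linarith [hsIoo.1]) (le_max_left _ _)
        have hs₁X : C.edge e s₁ ∈ X := hsegX _ hσEin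
          ⟨s₁, ⟨h3.le, by linarith [hsIoo.2]⟩, rfl⟩
        have := hcl s₁ ⟨h2, h1⟩ hs₁X
        exact hnel s₁ (C.seg_interior_Ioo hσE ⟨h3, lt_trans h1 hsIoo.2⟩) (ne_of_lt h1) this
    have : C.outDeg X v = 0 := by
      rw [outDeg, hempty, Set.ncard_empty]
    rw [this] at hvlt
    simp at hvlt
    omega

end TropicalCurve

namespace TropicalCurve

variable (C : TropicalCurve)

/-- Number of non-loop subsegments touching `A`. -/
noncomputable def wcount (pts : Finset C.Γ) (A : Finset C.Γ) : ℕ :=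
  ((C.ESeg pts).filter (fun σ => ¬(C.pa σ = C.pb σ) ∧ (C.pa σ ∈ A ∨ C.pb σ ∈ A))).card

lemma wcount_step (pts : Finset C.Γ) (A : Finset C.Γ) (v : C.Γ) (hv : v ∈ A) :
    C.wcount pts A = C.wcount pts (A.erase v)
      + ((C.ESeg pts).filter (fun σ => ¬(C.pa σ = C.pb σ) ∧
          ((C.pa σ = v ∧ C.pb σ ∉ A) ∨ (C.pb σ = v ∧ C.pa σ ∉ A)))).card := by
  classical
  set A' := A.erase v with hA'
  have hsplit : (C.ESeg pts).filter (fun σ => ¬(C.pa σ = C.pb σ) ∧ (C.pa σ ∈ A ∨ C.pb σ ∈ A))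
      = ((C.ESeg pts).filter (fun σ => ¬(C.pa σ = C.pb σ) ∧ (C.pa σ ∈ A' ∨ C.pb σ ∈ A')))
        ∪ ((C.ESeg pts).filter (fun σ => ¬(C.pa σ = C.pb σ) ∧
          ((C.pa σ = v ∧ C.pb σ ∉ A) ∨ (C.pb σ = v ∧ C.pa σ ∉ A)))) := by
    apply Finset.ext
    intro σ
    simp only [Finset.mem_union, Finset.mem_filter]
    constructor
    · rintro ⟨hE, hnl, htouch⟩
      by_cases hpa' : C.pa σ ∈ A'
      · exact Or.inl ⟨hE, hnl, Or.inl hpa'⟩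
      by_cases hpb' : C.pb σ ∈ A'
      · exact Or.inl ⟨hE, hnl, Or.inr hpb'⟩
      · right
        refine ⟨hE, hnl, ?_⟩
        rcases htouch with hpa | hpb
        · have hpav : C.pa σ = v := by
            by_contra hne
            exact hpa' (Finset.mem_erase.2 ⟨hne, hpa⟩)
          refine Or.inl ⟨hpav, fun hpbA => ?_⟩
          have hpbv : C.pb σ = v := by
            by_contra hne
            exact hpb' (Finset.mem_erase.2 ⟨hne, hpbA⟩)
          exact hnl (hpav.trans hpbv.symm)
        · have hpbv : C.pb σ = v := by
            by_contra hne
            exact hpb' (Finset.mem_erase.2 ⟨hne, hpb⟩)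
          refine Or.inr ⟨hpbv, fun hpaA => ?_⟩
          have hpav : C.pa σ = v := by
            by_contra hne
            exact hpa' (Finset.mem_erase.2 ⟨hne, hpaA⟩)
          exact hnl (hpav.trans hpbv.symm)
    · rintro (⟨hE, hnl, htouch⟩ | ⟨hE, hnl, hδ⟩)
      · refine ⟨hE, hnl, ?_⟩
        rcases htouch with h | h
        · exact Or.inl (Finset.mem_of_mem_erase h)
        · exact Or.inr (Finset.mem_of_mem_erase h)
      · refine ⟨hE, hnl, ?_⟩
        rcases hδ with ⟨h1, _⟩ | ⟨h1, _⟩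
        · exact Or.inl (h1 ▸ hv)
        · exact Or.inr (h1 ▸ hv)
  have hdisj : Disjoint
      ((C.ESeg pts).filter (fun σ => ¬(C.pa σ = C.pb σ) ∧ (C.pa σ ∈ A' ∨ C.pb σ ∈ A')))
      ((C.ESeg pts).filter (fun σ => ¬(C.pa σ = C.pb σ) ∧
        ((C.pa σ = v ∧ C.pb σ ∉ A) ∨ (C.pb σ = v ∧ C.pa σ ∉ A)))) := by
    rw [Finset.disjoint_left]
    rintro σ hσ1 hσ2
    obtain ⟨_, _, htouch⟩ := Finset.mem_filter.1 hσ1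
    obtain ⟨_, _, hδ⟩ := Finset.mem_filter.1 hσ2
    rcases hδ with ⟨h1, h2⟩ | ⟨h1, h2⟩
    · rcases htouch with h | h
      · exact (Finset.mem_erase.1 h).1 h1
      · exact h2 (Finset.mem_of_mem_erase h)
    · rcases htouch with h | h
      · exact h2 (Finset.mem_of_mem_erase h)
      · exact (Finset.mem_erase.1 h).1 h1
  rw [wcount, hsplit, Finset.card_union_of_disjoint hdisj, wcount]

lemma count_induction (P : C.Γ) (DP : Divisor C) (h₁ : C.IsReduced P DP)
    {pts : Finset C.Γ} (hPpts : P ∈ pts) :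
    ∀ n (A : Finset C.Γ), A.card = n → A ⊆ (C.Vhat pts).erase P →
      (∑ x ∈ A, DP x) + (A.card : ℤ) ≤ (C.wcount pts A : ℤ) := by
  intro n
  induction n using Nat.strong_induction_on with
  | _ n ih =>
    intro A hcard hsub
    rcases A.eq_empty_or_nonempty with rfl | hne
    · simp
    · obtain ⟨v, hvA, hvlt⟩ := C.metric_step P DP h₁ hPpts hsub hne
      set A' := A.erase v with hA'
      have hcard' : A'.card + 1 = A.card := Finset.card_erase_add_one hvA
      have hih : (∑ x ∈ A', DP x) + (A'.card : ℤ) ≤ (C.wcount pts A' : ℤ) := by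
        apply ih A'.card (by omega) A' rfl
        exact (Finset.erase_subset _ _).trans hsub
      have hsum : ∑ x ∈ A, DP x = DP v + ∑ x ∈ A', DP x :=
        (Finset.add_sum_erase A _ hvA).symm
      have hw := C.wcount_step pts A v hvA
      rw [hsum, ← hcard', hw]
      push_cast
      push_cast at hih hvlt
      linarith

lemma sum_erase_le_genus (P : C.Γ) (DP : Divisor C) (h₁ : C.IsReduced P DP) :
    (∑ x ∈ DP.support.erase P, DP x) ≤ C.genus := by
  classical
  set pts := insert P DP.support with hpts
  have hPpts : P ∈ pts := Finset.mem_insert_self _ _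
  set A₀ := (C.Vhat pts).erase P with hA₀
  have hPVhat : P ∈ C.Vhat pts := C.pts_subset_Vhat pts hPpts
  have hmain := C.count_induction P DP h₁ hPpts A₀.card A₀ rfl (le_refl _)
  have hwle : (C.wcount pts A₀ : ℤ) ≤ ((C.ESeg pts).card : ℤ) := by
    have := Finset.card_filter_le (C.ESeg pts) (fun σ => ¬(C.pa σ = C.pb σ) ∧
      (C.pa σ ∈ A₀ ∨ C.pb σ ∈ A₀))
    exact_mod_cast this
  have hcardA₀ : (A₀.card : ℤ) = (C.Vhat pts).card - 1 := by
    have := Finset.card_erase_add_one hPVhat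
    push_cast [← this]
    ring
  have hgenus : ((C.ESeg pts).card : ℤ) - ((C.Vhat pts).card : ℤ) + 1 = C.genus := by
    rw [C.card_ESeg, C.card_Vhat, genus]
    push_cast
    ring
  have hsum0 : (∑ x ∈ A₀, DP x) ≤ C.genus := by
    rw [← hgenus]
    rw [hcardA₀] at hmain
    linarith
  have hsub : DP.support.erase P ⊆ A₀ := by
    intro x hx
    obtain ⟨hne, hxsupp⟩ := Finset.mem_erase.1 hx
    exact Finset.mem_erase.2 ⟨hne, C.pts_subset_Vhat pts (Finset.mem_insert_of_mem hxsupp)⟩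
  have hmono : ∑ x ∈ DP.support.erase P, DP x ≤ ∑ x ∈ A₀, DP x := by
    apply Finset.sum_le_sum_of_subset_of_nonneg hsub
    intro x hxA₀ _
    exact h₁.1 x (Finset.mem_erase.1 hxA₀).1
  linarith

end TropicalCurve

/-- Let `Γ` be a tropical curve of genus `g`, let `D` be a
divisor of nonnegative rank on `Γ`, and let `P ∈ Γ`. Then the coefficient of the
`P`-reduced divisor `D_P` at `P` satisfies `D_P(P) ≥ deg(D) − g`. -/
theorem reduced_divisor_coeff_ge_deg_sub_genus (C : TropicalCurve) (g : ℕ)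
    (hg : C.genus = g) (D : TropicalCurve.Divisor C) (hD : 0 ≤ C.rank D)
    (P : C.Γ) (DP : TropicalCurve.Divisor C)
    (h₁ : C.IsReduced P DP) (h₂ : C.LinEquiv DP D) :
    C.deg D - (g : ℤ) ≤ DP P := by
  classical
  have hdeg : C.deg DP = C.deg D := C.deg_eq_of_linEquiv DP D h₂
  have hB : (∑ x ∈ DP.support.erase P, DP x) ≤ C.genus :=
    C.sum_erase_le_genus P DP h₁
  have hdecomp : C.deg DP = DP P + ∑ x ∈ DP.support.erase P, DP x := by
    have hsubset : DP.support ⊆ insert P DP.support := Finset.subset_insert _ _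
    have h1 : C.deg DP = ∑ x ∈ insert P DP.support, DP x :=
      Finsupp.sum_of_support_subset DP hsubset _ (fun _ _ => rfl)
    rw [h1, ← Finset.add_sum_erase _ _ (Finset.mem_insert_self P DP.support),
      Finset.erase_insert_eq_erase]
  rw [← hdeg, hdecomp, hg] at *
  linarith
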